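/- Let n be an odd natural number, let s be a natural number with 2 ≤ s ≤ ⌊n/2⌋, let h be the largest even number not exceeding s, and define p(n,t) := t · C(t−1, ⌊t/2⌋) · C(n−t, (n−1)/2 − ⌊t/2⌋). Then for every natural number t with 1 ≤ t ≤ s, p(n,t) ≤ C(n−1, (n−1)/2) · √( 2 n (h+1)² / (π h (n−h−1)) ). -/

import Mathlib

open Real Nat

lemma cb_cast (k : ℕ) : (Nat.centralBinom k : ℝ) * ((k ! : ℝ) * k !) = ((2 * k)! : ℝ) := by
  have h := Nat.choose_mul_factorial_mul_factorial (show k ≤ 2 * k by omega)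
  have h2 : 2 * k - k = k := by omega
  rw [h2] at h
  rw [Nat.centralBinom]
  push_cast [← h]
  ring

lemma wallis_id (k : ℕ) :
    (Nat.centralBinom k : ℝ) ^ 2 * (Real.Wallis.W k * (2 * (k:ℝ) + 1)) = 16 ^ k := by
  have hc := cb_cast k
  rw [Real.Wallis.W_eq_factorial_ratio]
  have h1 : ((2 * k)! : ℝ) ≠ 0 := by exact_mod_cast (Nat.factorial_ne_zero (2*k))
  have h2 : (2 * (k:ℝ) + 1) ≠ 0 := by positivity
  have h16 : (16 : ℝ) ^ k = 2 ^ (4 * k) := by rw [pow_mul]; norm_num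
  rw [h16]
  field_simp
  rw [← hc]
  ring

/-- Lower bound: `16^k ≤ c_k^2 * π * (2k+1) / 2`. -/
lemma cb_low (k : ℕ) :
    (16:ℝ) ^ k ≤ (Nat.centralBinom k : ℝ) ^ 2 * (π * (2 * (k:ℝ) + 1)) / 2 := by
  have h := wallis_id k
  have hW := Real.Wallis.W_le k
  nlinarith [sq_nonneg ((Nat.centralBinom k : ℝ)), Real.pi_pos,
    mul_le_mul_of_nonneg_left hW (mul_nonneg (sq_nonneg ((Nat.centralBinom k : ℝ))) (by positivity : (0:ℝ) ≤ 2*(k:ℝ)+1))]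

/-- Upper bound: `c_k^2 * π * k ≤ 16^k` for `k ≥ 1`. -/
lemma cb_up (k : ℕ) :
    (Nat.centralBinom k : ℝ) ^ 2 * (π * k) ≤ (16:ℝ) ^ k := by
  have h := wallis_id k
  have hW := Real.Wallis.le_W k
  -- W k ≥ (2k+1)/(2k+2) * (π/2), hence W k * (2k+1) ≥ π*(2k+1)^2/(2*(2k+2)) ≥ π*k
  have hk2 : (0:ℝ) < 2 * (k:ℝ) + 2 := by positivity
  have hWk : π * k ≤ Real.Wallis.W k * (2 * (k:ℝ) + 1) := by
    have h1 : ((2:ℝ) * k + 1) / (2 * k + 2) * (π / 2) * (2 * (k:ℝ) + 1) ≤ Real.Wallis.W k * (2 * (k:ℝ) + 1) :=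
      mul_le_mul_of_nonneg_right hW (by positivity)
    refine le_trans ?_ h1
    rw [div_mul_eq_mul_div, div_mul_eq_mul_div, le_div_iff₀ (by positivity)]
    nlinarith [Real.pi_pos]
  nlinarith [sq_nonneg ((Nat.centralBinom k : ℝ)),
    mul_le_mul_of_nonneg_left hWk (sq_nonneg ((Nat.centralBinom k : ℝ)))]

lemma choose_even_id (j : ℕ) (hj : 1 ≤ j) :
    2 * (2 * j - 1).choose j = Nat.centralBinom j := by
  obtain ⟨i, rfl⟩ := Nat.exists_eq_add_of_le hj
  have e1 : 2 * (1 + i) - 1 = 2 * i + 1 := by omega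
  have e2 : 1 + i = i + 1 := by omega
  rw [e1, e2, Nat.centralBinom]
  have e3 : 2 * (i + 1) = (2 * i + 1) + 1 := by omega
  rw [e3, Nat.choose_succ_succ (2 * i + 1) i]
  have e4 : (2 * i + 1).choose i = (2 * i + 1).choose (i + 1) := by
    have := Nat.choose_symm (show i + 1 ≤ 2 * i + 1 by omega)
    have e5 : 2 * i + 1 - (i + 1) = i := by omega
    rw [e5] at this
    exact this
  simp only [Nat.choose_succ_succ, Nat.succ_eq_add_one] at *
  omega

lemma choose_odd_id (a : ℕ) :
    2 * (2 * a + 1).choose a = Nat.centralBinom (a + 1) := by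
  rw [Nat.centralBinom]
  have e3 : 2 * (a + 1) = (2 * a + 1) + 1 := by omega
  rw [e3, Nat.choose_succ_succ (2 * a + 1) a]
  have e4 : (2 * a + 1).choose a = (2 * a + 1).choose (a + 1) := by
    have := Nat.choose_symm (show a + 1 ≤ 2 * a + 1 by omega)
    have e5 : 2 * a + 1 - (a + 1) = a := by omega
    rw [e5] at this
    exact this
  simp only [Nat.choose_succ_succ, Nat.succ_eq_add_one] at *
  omega

lemma sq_trick (a b X : ℝ) (ha : 0 ≤ a) (hb : 0 ≤ b) (h : a ^ 2 ≤ b ^ 2 * X) :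
    a ≤ b * Real.sqrt X := by
  calc a = Real.sqrt (a ^ 2) := (Real.sqrt_sq ha).symm
    _ ≤ Real.sqrt (b ^ 2 * X) := Real.sqrt_le_sqrt h
    _ = b * Real.sqrt X := by rw [Real.sqrt_mul (sq_nonneg b), Real.sqrt_sq hb]

lemma generic (cj cl cm P Q R T E J L S D' N : ℝ) (hπ : (0:ℝ) < π)
    (hP : 0 < P) (hQ : 0 < Q) (hR : 0 < R) (hT : 0 < T)
    (hJ : 0 < J) (hL : 0 < L) (hS : 0 < S) (hD : 0 < D') (hN : 0 ≤ N) (hE : 0 ≤ E)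
    (hPQ : P * Q = T * R)
    (hcj : cj ^ 2 * (π * J) ≤ P) (hcl : cl ^ 2 * (π * L) ≤ Q)
    (hcm : 2 * R ≤ cm ^ 2 * (π * S))
    (hkey : E * S * D' ≤ 2 * N * (J * L)) :
    E * (cj * cl) ^ 2 ≤ T * cm ^ 2 * (N / (π * D')) := by
  have h1 : cj ^ 2 ≤ P / (π * J) := (le_div_iff₀ (by positivity)).2 hcj
  have h2 : cl ^ 2 ≤ Q / (π * L) := (le_div_iff₀ (by positivity)).2 hcl
  have h3 : 2 * R / (π * S) ≤ cm ^ 2 := (div_le_iff₀ (by positivity)).2 (by linarith)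
  calc E * (cj * cl) ^ 2 = E * (cj ^ 2 * cl ^ 2) := by ring
    _ ≤ E * (P / (π * J) * (Q / (π * L))) := by
        apply mul_le_mul_of_nonneg_left _ hE
        exact mul_le_mul h1 h2 (sq_nonneg _) (by positivity)
    _ = E * (T * R) / (π * J * (π * L)) := by rw [← hPQ]; field_simp
    _ ≤ T * (2 * R / (π * S)) * (N / (π * D')) := by
        have heq : T * (2 * R / (π * S)) * (N / (π * D')) = 2 * T * R * N / (π * S * (π * D')) := by
          rw [eq_div_iff (by positivity : (π * S * (π * D')) ≠ 0)]
          field_simp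
          try ring
          try tauto
        rw [heq, div_le_div_iff₀ (by positivity) (by positivity)]
        nlinarith [mul_le_mul_of_nonneg_left hkey (show (0:ℝ) ≤ T * R * π ^ 2 by positivity)]
    _ ≤ T * cm ^ 2 * (N / (π * D')) := by
        apply mul_le_mul_of_nonneg_right _ (by positivity)
        exact mul_le_mul_of_nonneg_left h3 hT.le

/-- `p(n,t) = t * C(t-1, ⌊t/2⌋) * C(n-t, (n-1)/2 - ⌊t/2⌋)` from the proof of
Theorem 1.2. -/
def p (n t : ℕ) : ℕ :=
  t * ((t - 1).choose (t / 2) * (n - t).choose ((n - 1) / 2 - t / 2))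

set_option maxHeartbeats 1000000 in
open Real in
/-- Main quantitative bound in the proof of Theorem 1.2: for `n` odd,
`2 ≤ s ≤ ⌊n/2⌋`, `h` the largest even number not exceeding `s`, and every
`1 ≤ t ≤ s`, we have
`p(n,t) ≤ C(n-1, (n-1)/2) * √(2n(h+1)² / (π h (n-h-1)))`. -/
theorem p_sqrt_bound (n s h t : ℕ) (hn : Odd n) (hs1 : 2 ≤ s) (hs2 : s ≤ n / 2)
    (hh : Even h ∧ h ≤ s ∧ s < h + 2) (ht1 : 1 ≤ t) (ht2 : t ≤ s) :
    (p n t : ℝ) ≤ ((n - 1).choose ((n - 1) / 2) : ℝ) *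
      Real.sqrt (2 * n * (h + 1) ^ 2 / (π * h * ((n : ℝ) - h - 1))) := by
  obtain ⟨m, rfl⟩ := hn
  obtain ⟨u, hu⟩ := hh.1
  have hh1 : h ≤ s := hh.2.1
  have hh2 : s < h + 2 := hh.2.2
  have hsm : s ≤ m := by omega
  have hh0 : 2 ≤ h := by omega
  have hhm : h ≤ m := by omega
  have hm2 : 2 ≤ m := by omega
  have hπ := Real.pi_pos
  -- rewrite the RHS choose as centralBinom m
  have hcm_eq : (2 * m + 1 - 1).choose ((2 * m + 1 - 1) / 2) = Nat.centralBinom m := by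
    have e2 : 2 * m / 2 = m := by omega
    have e1 : 2 * m + 1 - 1 = 2 * m := by omega
    rw [e1, e2, Nat.centralBinom]
  rw [hcm_eq]
  -- rewrite the sqrt argument
  have hXeq : 2 * ((2 * m + 1 : ℕ) : ℝ) * ((h : ℝ) + 1) ^ 2 /
      (π * h * (((2 * m + 1 : ℕ) : ℝ) - h - 1)) =
      (2 * (2 * (m : ℝ) + 1) * ((h : ℝ) + 1) ^ 2) / (π * ((h : ℝ) * (2 * (m : ℝ) - h))) := by
    push_cast
    ring
  rw [hXeq]
  set M : ℝ := (m : ℝ) with hM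
  set H : ℝ := (h : ℝ) with hHdef
  have hH2 : (2:ℝ) ≤ H := by rw [hHdef]; exact_mod_cast hh0
  have hHM : H ≤ M := by rw [hHdef, hM]; exact_mod_cast hhm
  have hM2 : (2:ℝ) ≤ M := by rw [hM]; exact_mod_cast hm2
  set N : ℝ := 2 * (2 * M + 1) * (H + 1) ^ 2 with hNdef
  set D' : ℝ := H * (2 * M - H) with hDdef
  have hD'pos : 0 < D' := by
    have : (0:ℝ) < 2 * M - H := by linarith
    positivity
  have hNpos : 0 < N := by positivity
  have hX1 : (1:ℝ) ≤ N / (π * D') := by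
    rw [le_div_iff₀ (by positivity)]
    have hπ4 : π ≤ 4 := Real.pi_le_four
    nlinarith [mul_pos hD'pos hπ]
  have hcm_pos : (0:ℝ) < (Nat.centralBinom m : ℝ) := by
    exact_mod_cast Nat.centralBinom_pos m
  have hsqrtX : (1:ℝ) ≤ Real.sqrt (N / (π * D')) := by
    rw [show (1:ℝ) = Real.sqrt 1 from (Real.sqrt_one).symm]
    exact Real.sqrt_le_sqrt hX1
  rcases Nat.even_or_odd t with het | hot
  · -- t even, t = 2j, j ≥ 1
    obtain ⟨j, hj⟩ := het
    have hj1 : 1 ≤ j := by omega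
    have h2jh : 2 * j ≤ h := by omega
    have hjm : j ≤ m := by omega
    -- p = 2j * (C(2j-1,j) * C(2(m-j)+1, m-j)), and 4*p = 2j * cb j * cb (m-j+1)
    have hp4 : 4 * p (2 * m + 1) t =
        2 * j * (Nat.centralBinom j * Nat.centralBinom (m - j + 1)) := by
      have e1 : t - 1 = 2 * j - 1 := by omega
      have e2 : t / 2 = j := by omega
      have e3 : 2 * m + 1 - t = 2 * (m - j) + 1 := by omega
      have e4 : (2 * m + 1 - 1) / 2 - t / 2 = m - j := by omega
      rw [p, e4, e3, e2, e1]
      have i1 := choose_even_id j hj1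
      have i2 := choose_odd_id (m - j)
      have et : t = 2 * j := by omega
      calc 4 * (t * ((2 * j - 1).choose j * (2 * (m - j) + 1).choose (m - j)))
          = t * ((2 * (2 * j - 1).choose j) * (2 * (2 * (m - j) + 1).choose (m - j))) := by ring
        _ = 2 * j * (Nat.centralBinom j * Nat.centralBinom (m - j + 1)) := by
            rw [i1, i2, et]
    have key : (4 * (p (2 * m + 1) t : ℝ)) ≤ 4 * (Nat.centralBinom m : ℝ) *
        Real.sqrt (N / (π * D')) := by
      apply sq_trick _ _ _ (by positivity) (by positivity)
      have hcast : (4 * (p (2 * m + 1) t : ℝ)) =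
          2 * (j:ℝ) * ((Nat.centralBinom j : ℝ) * (Nat.centralBinom (m - j + 1) : ℝ)) := by
        exact_mod_cast congrArg (Nat.cast : ℕ → ℝ) hp4
      rw [hcast]
      have hmain : (2 * (j:ℝ)) ^ 2 *
          ((Nat.centralBinom j : ℝ) * (Nat.centralBinom (m - j + 1) : ℝ)) ^ 2 ≤
          16 * (Nat.centralBinom m : ℝ) ^ 2 * (N / (π * D')) := by
        apply generic _ _ _ ((16:ℝ)^j) ((16:ℝ)^(m - j + 1)) ((16:ℝ)^m) 16 _ ((j:ℝ))
          ((m:ℝ) - j + 1) (2 * M + 1) D' N hπ (by positivity) (by positivity) (by positivity)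
          (by norm_num) (by exact_mod_cast hj1) (by
            have : (j:ℝ) ≤ m := by exact_mod_cast hjm
            linarith) (by positivity) hD'pos hNpos.le (by positivity)
        · rw [← pow_add]
          have : j + (m - j + 1) = m + 1 := by omega
          rw [this, pow_succ]
          ring
        · exact cb_up j
        · have := cb_up (m - j + 1)
          have ec : ((m - j + 1 : ℕ) : ℝ) = (m:ℝ) - j + 1 := by
            push_cast [Nat.cast_sub hjm]
            ring
          rw [ec] at this
          exact this
        · have := cb_low m
          rw [hM]
          linarith [cb_low m]
        · -- key nat inequality: (2j)^2 * S * D' ≤ 2 N (j * (M - j + 1))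
          -- i.e. 4 j^2 (2M+1) H (2M - H) ≤ 4 (2M+1)(H+1)^2 j (M-j+1)
          have hJr : (2:ℝ) * j ≤ H := by rw [hHdef]; exact_mod_cast h2jh
          have hj1r : (1:ℝ) ≤ (j:ℝ) := by exact_mod_cast hj1
          rw [hNdef, hDdef]
          have hMH : (0:ℝ) ≤ 2 * M - H := by linarith
          have hH0 : (0:ℝ) ≤ H := by linarith
          have t1 : 2 * (j:ℝ) * (H * (2 * M - H)) ≤ H * (H * (2 * M - H)) :=
            mul_le_mul_of_nonneg_right hJr (by positivity)
          have t2 : H * (H * (2 * M - H)) ≤ (H + 1) ^ 2 * (2 * M - H) := by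
            nlinarith [mul_nonneg (show (0:ℝ) ≤ 2 * H + 1 by linarith) hMH]
          have t3 : (H + 1) ^ 2 * (2 * M - H) ≤ (H + 1) ^ 2 * (2 * M - 2 * j + 2) := by
            apply mul_le_mul_of_nonneg_left _ (by positivity)
            linarith
          have keyp : 2 * (j:ℝ) * (H * (2 * M - H)) ≤ (H + 1) ^ 2 * (2 * M - 2 * j + 2) := by
            linarith
          nlinarith [mul_le_mul_of_nonneg_left keyp
            (show (0:ℝ) ≤ 2 * (j:ℝ) * (2 * M + 1) by positivity)]
      calc (2 * (j:ℝ) * ((Nat.centralBinom j : ℝ) * (Nat.centralBinom (m - j + 1) : ℝ))) ^ 2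
          = (2 * (j:ℝ)) ^ 2 * ((Nat.centralBinom j : ℝ) * (Nat.centralBinom (m - j + 1) : ℝ)) ^ 2 := by
            ring
        _ ≤ 16 * (Nat.centralBinom m : ℝ) ^ 2 * (N / (π * D')) := hmain
        _ = (4 * (Nat.centralBinom m : ℝ)) ^ 2 * (N / (π * D')) := by ring
    linarith
  · -- t odd, t = 2j+1
    obtain ⟨j, hj⟩ := hot
    have hjm : j ≤ m := by omega
    have e1 : t - 1 = 2 * j := by omega
    have e2 : t / 2 = j := by omega
    have e3 : 2 * m + 1 - t = 2 * (m - j) := by omega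
    have e4 : (2 * m + 1 - 1) / 2 - t / 2 = m - j := by omega
    have hp_eq : p (2 * m + 1) t =
        (2 * j + 1) * (Nat.centralBinom j * Nat.centralBinom (m - j)) := by
      rw [p, e4, e3, e2, e1, Nat.centralBinom, Nat.centralBinom, hj]
    rcases Nat.eq_zero_or_pos j with hj0 | hj1
    · -- t = 1 : p = centralBinom m
      subst hj0
      have : p (2 * m + 1) t = Nat.centralBinom m := by
        rw [hp_eq]
        simp [Nat.centralBinom_zero]
      rw [this]
      calc (Nat.centralBinom m : ℝ) = (Nat.centralBinom m : ℝ) * 1 := by ring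
        _ ≤ (Nat.centralBinom m : ℝ) * Real.sqrt (N / (π * D')) := by
            exact mul_le_mul_of_nonneg_left hsqrtX hcm_pos.le
    · have h2jh : 2 * j ≤ h := by omega
      have hmj1 : j + 1 ≤ m - j := by omega
      apply sq_trick _ _ _ (by positivity) (by positivity)
      have hcast : (p (2 * m + 1) t : ℝ) =
          (2 * (j:ℝ) + 1) * ((Nat.centralBinom j : ℝ) * (Nat.centralBinom (m - j) : ℝ)) := by
        exact_mod_cast congrArg (Nat.cast : ℕ → ℝ) hp_eq
      rw [hcast]
      have hmain : (2 * (j:ℝ) + 1) ^ 2 *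
          ((Nat.centralBinom j : ℝ) * (Nat.centralBinom (m - j) : ℝ)) ^ 2 ≤
          1 * (Nat.centralBinom m : ℝ) ^ 2 * (N / (π * D')) := by
        apply generic _ _ _ ((16:ℝ)^j) ((16:ℝ)^(m - j)) ((16:ℝ)^m) 1 _ ((j:ℝ))
          ((m:ℝ) - j) (2 * M + 1) D' N hπ (by positivity) (by positivity) (by positivity)
          (by norm_num) (by exact_mod_cast hj1) (by
            have : ((j:ℝ)) + 1 ≤ (m:ℝ) - j := by
              have := hmj1
              have hc : ((m - j : ℕ) : ℝ) = (m:ℝ) - j := by push_cast [Nat.cast_sub hjm]; ring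
              rw [← hc]
              exact_mod_cast hmj1
            linarith) (by positivity) hD'pos hNpos.le (by positivity)
        · rw [← pow_add, one_mul]
          congr 1
          omega
        · exact cb_up j
        · have := cb_up (m - j)
          have ec : ((m - j : ℕ) : ℝ) = (m:ℝ) - j := by push_cast [Nat.cast_sub hjm]; ring
          rw [ec] at this
          exact this
        · rw [hM]
          linarith [cb_low m]
        · -- (2j+1)^2 * (2M+1) * D' ≤ 2 N (j (M-j)) ⟸ (2j+1)^2 H(2M-H) ≤ 4 j (M-j)(H+1)^2
          have hJr : (2:ℝ) * j ≤ H := by rw [hHdef]; exact_mod_cast h2jh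
          have hj1r : (1:ℝ) ≤ (j:ℝ) := by exact_mod_cast hj1
          rw [hNdef, hDdef]
          have keyp : (2 * (j:ℝ) + 1) ^ 2 * (H * (2 * M - H)) ≤
              4 * (j:ℝ) * (M - j) * (H + 1) ^ 2 := by
            have fact : 4 * (j:ℝ) * (M - j) * (H + 1) ^ 2 -
                (2 * (j:ℝ) + 1) ^ 2 * (H * (2 * M - H)) =
                (H - 2 * j) * (4 * H * j * (M + 1) + H + 2 * j - 2 * M) := by ring
            have hpos2 : (0:ℝ) ≤ 4 * H * j * (M + 1) + H + 2 * j - 2 * M := by nlinarith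
            nlinarith [mul_nonneg (show (0:ℝ) ≤ H - 2 * j by linarith) hpos2]
          nlinarith [mul_le_mul_of_nonneg_left keyp (show (0:ℝ) ≤ 2 * M + 1 by linarith)]
      calc ((2 * (j:ℝ) + 1) * ((Nat.centralBinom j : ℝ) * (Nat.centralBinom (m - j) : ℝ))) ^ 2
          = (2 * (j:ℝ) + 1) ^ 2 * ((Nat.centralBinom j : ℝ) * (Nat.centralBinom (m - j) : ℝ)) ^ 2 := by
            ring
        _ ≤ 1 * (Nat.centralBinom m : ℝ) ^ 2 * (N / (π * D')) := hmain
        _ = (Nat.centralBinom m : ℝ) ^ 2 * (N / (π * D')) := by ring
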